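/- arXiv:1601.00096 — 2 statements merged into one kernel-verified Lean document; each statement's English description precedes it below -/
import Mathlib

section
/- If D : W → G is a generalized Dedekind symbol with reciprocity function f (i.e. D(p,q)=D(p,q+p), D(p,-q)=D(-p,q), and D(p,q)·D(q,-p)⁻¹=f(p,q)), then f itself is a reciprocity function: it satisfies f(p,-q)=f(-p,q), f(p,q)·f(-q,p)=1_G, and f(p,p+q)·f(p+q,q)=f(p,q). -/
lemma gcd_aux1 (p q : ℤ) (h : Int.gcd p q = 1) : Int.gcd p (-q) = 1 := by
  simpa using h

lemma gcd_aux2 (p q : ℤ) (h : Int.gcd p q = 1) : Int.gcd q p = 1 := by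
  rwa [Int.gcd_comm]

lemma gcd_aux3 (p q : ℤ) (h : Int.gcd p q = 1) : Int.gcd p (p + q) = 1 := by
  rw [← Int.isCoprime_iff_gcd_eq_one] at *
  simpa [add_comm] using h.add_mul_left_right 1

lemma gcd_aux4 (p q : ℤ) (h : Int.gcd p q = 1) : Int.gcd (p + q) q = 1 := by
  rw [← Int.isCoprime_iff_gcd_eq_one] at *
  simpa using h.add_mul_right_left 1

/-- The function f associated to a generalized Dedekind symbol D
is a reciprocity function. -/
theorem dedekind_symbol_gives_reciprocity {G : Type*} [Group G]
    (D f : ℤ → ℤ → G)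
    (h19 : ∀ p q : ℤ, Int.gcd p q = 1 → D p q = D p (q + p))
    (h110 : ∀ p q : ℤ, Int.gcd p q = 1 → D p (-q) = D (-p) q)
    (h111 : ∀ p q : ℤ, Int.gcd p q = 1 → D p q * (D q (-p))⁻¹ = f p q) :
    (∀ p q : ℤ, Int.gcd p q = 1 → f p (-q) = f (-p) q) ∧
    (∀ p q : ℤ, Int.gcd p q = 1 → f p q * f (-q) p = 1) ∧
    (∀ p q : ℤ, Int.gcd p q = 1 → f p (p + q) * f (p + q) q = f p q) := by
  refine ⟨?_, ?_, ?_⟩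
  · intro p q h
    rw [← h111 p (-q) (gcd_aux1 p q h), ← h111 (-p) q (by simpa using h)]
    rw [h110 p q h]
    congr 1
    have : D (-q) (-p) = D q p := by
      have := h110 (-q) p (by simp [Int.gcd_comm] at *; simpa using h)
      simpa using this
    rw [this]
    congr 1
    simp
  · intro p q h
    rw [← h111 p q h, ← h111 (-q) p (by simpa [Int.gcd_comm] using gcd_aux2 p q h)]
    have : D (-q) p = D q (-p) := (h110 q p (gcd_aux2 p q h)).symm
    rw [this]
    group
  · intro p q h
    have hpq : Int.gcd p (p + q) = 1 := gcd_aux3 p q h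
    have hq : Int.gcd (p + q) q = 1 := gcd_aux4 p q h
    rw [← h111 p (p + q) hpq, ← h111 (p + q) q hq, ← h111 p q h]
    have e1 : D p (p + q) = D p q := by
      rw [h19 p q h]; ring_nf
    have e2 : D (p + q) (-p) = D (p + q) q := by
      have := h19 (p + q) (-p) (gcd_aux1 _ _ (gcd_aux2 _ _ hpq))
      simpa using this
    have e3 : D q (-(p + q)) = D q (-p) := by
      have := h19 q (-(p+q)) (gcd_aux1 _ _ (gcd_aux2 _ _ hq))
      rw [this]; ring_nf
    rw [e1, e2, e3]
    group
end

section
/- Given a group G, any G-valued reciprocity function f on W uniquely determines a generalized Dedekind symbol D with reciprocity function f: there exists exactly one map D : W → G satisfying D(p,q)=D(p,q+p), D(p,-q)=D(-p,q), D(p,q)·D(q,-p)⁻¹=f(p,q), and the normalization D(1,0)=1_G. -/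
namespace RecipDed

def sres (q c : ℤ) : ℤ := (q.sign * c) % q

lemma sres_nonneg {q : ℤ} (hq : q ≠ 0) (c : ℤ) : 0 ≤ sres q c :=
  Int.emod_nonneg _ hq

lemma sres_lt_abs {q : ℤ} (hq : q ≠ 0) (c : ℤ) : sres q c < |q| := by
  rcases lt_or_gt_of_ne hq with h | h
  · have : sres q c = q.sign * c % (-q) := by
      rw [sres, Int.emod_neg]
    rw [this, abs_of_neg h]
    exact Int.emod_lt_of_pos _ (by omega)
  · rw [sres, abs_of_pos h]; exact Int.emod_lt_of_pos _ h

lemma sres_natAbs_lt {q : ℤ} (hq : q ≠ 0) (c : ℤ) : (sres q c).natAbs < q.natAbs := by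
  have h1 := sres_nonneg hq c
  have h2 := sres_lt_abs hq c
  rw [Int.abs_eq_natAbs] at h2
  omega

lemma sres_neg_neg (q c : ℤ) : sres (-q) (-c) = sres q c := by
  rw [sres, sres, Int.sign_neg, Int.emod_neg, neg_mul_neg]

lemma sres_add_mul (q c k : ℤ) : sres q (c + k * q) = sres q c := by
  rw [sres, sres, show q.sign * (c + k * q) = q.sign * c + (q.sign * k) * q by ring,
    Int.add_mul_emod_self_right]

lemma sres_of_pos {q : ℤ} (hq : 0 < q) (c : ℤ) : sres q c = c % q := by
  rw [sres, Int.sign_eq_one_of_pos hq, one_mul]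

lemma sres_of_range {q c : ℤ} (hq : 0 < q) (h0 : 0 ≤ c) (h1 : c < q) : sres q c = c := by
  rw [sres_of_pos hq, Int.emod_eq_of_lt h0 h1]

lemma sres_zero (q : ℤ) : sres q 0 = 0 := by
  rw [sres, mul_zero, Int.zero_emod]

lemma copC {p q : ℤ} (h : Int.gcd p q = 1) : IsCoprime p q := Int.isCoprime_iff_gcd_eq_one.mpr h
lemma copG {p q : ℤ} (h : IsCoprime p q) : Int.gcd p q = 1 := Int.isCoprime_iff_gcd_eq_one.mp h

variable {G : Type*} [Group G]

def psi (f : ℤ → ℤ → G) (a b : ℤ) : G :=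
  if h : b = 0 then 1 else f a b * psi f b (sres b (-a))
termination_by b.natAbs
decreasing_by exact sres_natAbs_lt h (-a)

lemma psi_zero (f : ℤ → ℤ → G) (a : ℤ) : psi f a 0 = 1 := by
  rw [psi]; simp

lemma psi_ne (f : ℤ → ℤ → G) {b : ℤ} (h : b ≠ 0) (a : ℤ) :
    psi f a b = f a b * psi f b (sres b (-a)) := by
  rw [psi]; simp [h]

lemma mul_one_comm {a b : G} (h : a * b = 1) : b * a = 1 := by
  rw [← inv_eq_of_mul_eq_one_left h]; simp

section Master

variable (f : ℤ → ℤ → G)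
    (h16 : ∀ p q : ℤ, Int.gcd p q = 1 → f p (-q) = f (-p) q)
    (h17 : ∀ p q : ℤ, Int.gcd p q = 1 → f p q * f (-q) p = 1)
    (h18 : ∀ p q : ℤ, Int.gcd p q = 1 → f p (p + q) * f (p + q) q = f p q)

include h16 h17 h18

lemma f11 : f 1 1 = 1 := by
  have h : f 1 1 * f 1 0 = f 1 0 := by simpa using h18 1 0 (by decide)
  exact mul_right_cancel (b := f 1 0) (by rw [one_mul]; exact h)

lemma f1neg1 : f 1 (-1) = 1 := by
  have h : f 1 0 * f 0 (-1) = f 1 (-1) := by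
    have := h18 1 (-1) (by decide)
    norm_num at this
    exact this
  have h2 : f 0 (-1) = f 0 1 := by simpa using h16 0 1 (by decide)
  have h3 : f 1 0 * f 0 1 = 1 := by simpa using h17 1 0 (by decide)
  rw [← h, h2, h3]

lemma master : ∀ (N : ℕ) (p q : ℤ), 2 * q.natAbs + p.natAbs ≤ N →
    0 < p → q ≠ 0 → Int.gcd p q = 1 →
    psi f p (sres p q) = f p q * psi f |q| (sres q (-p)) := by
  have base : ∀ p q : ℤ, 0 < q → q < p → Int.gcd p q = 1 →
      psi f p (sres p q) = f p q * psi f |q| (sres q (-p)) := by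
    intro p q h0 h1 _
    rw [sres_of_range (h0.trans h1) h0.le h1, abs_of_pos h0, psi_ne f h0.ne' p]
  intro N
  induction N with
  | zero =>
    intro p q hm hp _ _
    omega
  | succ N ih =>
    intro p q hm hp hq hg
    rcases hq.lt_or_gt with hneg | hpos
    · -- q < 0
      rcases lt_trichotomy (q + p) 0 with h1 | h1 | h1
      · -- q < -p : flip + sym, IH at (-q, p)
        have hg2 : Int.gcd (-q) p = 1 := copG ((copC hg).symm.neg_left)
        have key := ih (-q) p (by omega) (by omega) hp.ne' hg2
        rw [neg_neg, abs_of_pos hp] at key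
        have hsr : sres q (-p) = sres (-q) p := by
          have := sres_neg_neg q (-p); rw [neg_neg] at this; exact this.symm
        rw [abs_of_neg hneg, hsr, key, ← mul_assoc, h17 p q hg, one_mul]
      · -- q = -p
        have hq_eq : q = -p := by omega
        subst hq_eq
        have hu : IsUnit p := isCoprime_self.mp (by simpa using (copC hg).neg_right)
        have hp1 : p = 1 := by rcases Int.isUnit_iff.mp hu with h | h <;> omega
        subst hp1
        have e1 : sres 1 (-1) = 0 := by decide
        have e2 : sres (-1) (-1) = 0 := by decide
        have e3 : |(-1 : ℤ)| = 1 := by norm_num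
        rw [e1, e3, e2, psi_zero, f1neg1 f h16 h17 h18, mul_one]
      · -- -p < q < 0 : step
        have hq'p : q + p < p := by omega
        have hgq' : Int.gcd p (q + p) = 1 := by
          have := (copC hg).add_mul_right_right 1
          rw [one_mul] at this; exact copG this
        have A := base p (q + p) h1 hq'p hgq'
        have hgB : Int.gcd (q + p) q = 1 := by
          have := (copC hg).add_mul_left_left 1
          rw [mul_one, add_comm p q] at this; exact copG this
        have B := ih (q + p) q (by omega) h1 hq hgB
        have e1 : sres p (q + p) = sres p q := by
          have := sres_add_mul p q 1
          rw [show q + 1 * p = q + p by ring] at this; exact this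
        have e2 : sres (q + p) q = sres (q + p) (-p) := by
          have := sres_add_mul (q + p) (-p) 1
          rw [show -p + 1 * (q + p) = q by ring] at this; exact this
        have e3 : sres q (-(q + p)) = sres q (-p) := by
          have := sres_add_mul q (-p) (-1)
          rw [show -p + (-1) * q = -(q + p) by ring] at this; exact this
        rw [← e1, A, abs_of_pos h1, ← e2, B, e3, ← mul_assoc,
          show f p (q + p) * f (q + p) q = f p q by
            rw [add_comm q p]; exact h18 p q hg]
    · -- 0 < q
      rcases lt_trichotomy q p with h1 | h1 | h1
      · exact base p q hpos h1 hg
      · -- q = p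
        subst h1
        have hu : IsUnit q := isCoprime_self.mp (copC hg)
        have hp1 : q = 1 := by rcases Int.isUnit_iff.mp hu with h | h <;> omega
        subst hp1
        have e1 : sres 1 1 = 0 := by decide
        have e2 : sres 1 (-1) = 0 := by decide
        have e3 : |(1 : ℤ)| = 1 := by norm_num
        rw [e1, e3, e2, psi_zero, f11 f h16 h17 h18, mul_one]
      · -- p < q : flip, IH at (q, -p)
        have hmp : Int.gcd q (-p) = 1 := copG ((copC hg).symm.neg_right)
        have key := ih q (-p) (by omega) hpos (neg_ne_zero.mpr hp.ne') hmp
        rw [abs_neg, abs_of_pos hp, sres_neg_neg] at key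
        have hfinv : f q (-p) * f p q = 1 := by simpa using h17 q (-p) hmp
        rw [abs_of_pos hpos, key, ← mul_assoc, mul_one_comm hfinv, one_mul]


lemma fm1m1 : f (-1) (-1) = 1 := by
  have h2 := h18 (-1) 0 (by decide)
  norm_num at h2
  exact h2

lemma fm11 : f (-1) 1 = 1 := by
  have := h16 1 1 (by decide)
  rw [← this]
  exact f1neg1 f h16 h17 h18

lemma master' {p q : ℤ} (hp : p ≠ 0) (hq : q ≠ 0) (hg : Int.gcd p q = 1) :
    psi f |p| (sres p q) = f p q * psi f |q| (sres q (-p)) := by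
  rcases hp.lt_or_gt with h | h
  · have hg2 : Int.gcd (-p) (-q) = 1 := copG ((copC hg).neg_left.neg_right)
    have key := master f h16 h17 h18 (2 * (-q).natAbs + (-p).natAbs) (-p) (-q)
      le_rfl (by omega) (neg_ne_zero.2 hq) hg2
    rw [sres_neg_neg p q, sres_neg_neg q (-p), abs_neg] at key
    have hf : f (-p) (-q) = f p q := by
      have := h16 (-p) q (copG (copC hg).neg_left)
      rwa [neg_neg] at this
    rw [hf] at key
    rw [show |p| = -p from abs_of_neg h]
    exact key
  · have key := master f h16 h17 h18 (2 * q.natAbs + p.natAbs) p q le_rfl h hq hg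
    rw [show |p| = p from abs_of_pos h]
    exact key

end Master

/-- The candidate Dedekind symbol built from a reciprocity function. -/
def Dsym (f : ℤ → ℤ → G) (p q : ℤ) : G :=
  if q = 0 then 1 else f p q * psi f |q| (sres q (-p))

lemma Dsym_zero (f : ℤ → ℤ → G) (p : ℤ) : Dsym f p 0 = 1 := if_pos rfl

lemma Dsym_ne (f : ℤ → ℤ → G) {q : ℤ} (hq : q ≠ 0) (p : ℤ) :
    Dsym f p q = f p q * psi f |q| (sres q (-p)) := if_neg hq

section Props

variable (f : ℤ → ℤ → G)
    (h16 : ∀ p q : ℤ, Int.gcd p q = 1 → f p (-q) = f (-p) q)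
    (h17 : ∀ p q : ℤ, Int.gcd p q = 1 → f p q * f (-q) p = 1)
    (h18 : ∀ p q : ℤ, Int.gcd p q = 1 → f p (p + q) * f (p + q) q = f p q)

include h16 h17 h18

lemma Dsym_red {p q : ℤ} (hp : p ≠ 0) (hq : q ≠ 0) (hg : Int.gcd p q = 1) :
    Dsym f p q = psi f |p| (sres p q) := by
  rw [Dsym_ne f hq, ← master' f h16 h17 h18 hp hq hg]

lemma DsymP1 {p q : ℤ} (hg : Int.gcd p q = 1) : Dsym f p q = Dsym f p (q + p) := by
  rcases eq_or_ne p 0 with rfl | hp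
  · rw [add_zero]
  rcases eq_or_ne q 0 with rfl | hq
  · -- q = 0, p = ±1
    have hp1 : p = 1 ∨ p = -1 := by
      have h0 : Int.gcd p 0 = 1 := hg
      rw [Int.gcd_zero_right] at h0
      omega
    rw [zero_add, Dsym_zero, Dsym_ne f hp]
    have hs : sres p (-p) = 0 := by
      have h2 := sres_add_mul p 0 (-1)
      rw [show (0:ℤ) + (-1) * p = -p by ring, sres_zero] at h2
      exact h2
    rw [hs, psi_zero]
    rcases hp1 with rfl | rfl
    · rw [f11 f h16 h17 h18, mul_one]
    · rw [fm1m1 f h16 h17 h18, mul_one]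
  rcases eq_or_ne (q + p) 0 with hqp | hqp
  · -- q = -p, p = ±1
    have hq_eq : q = -p := by omega
    subst hq_eq
    have hp1 : p = 1 ∨ p = -1 := by
      have h2 : IsCoprime p p := by simpa using (copC hg).neg_right
      exact Int.isUnit_iff.mp (isCoprime_self.mp h2)
    rw [hqp, Dsym_zero, Dsym_ne f hq]
    have hs : sres (-p) (-p) = 0 := by
      rw [sres_neg_neg]
      have h2 := sres_add_mul p 0 1
      rw [show (0:ℤ) + 1 * p = p by ring, sres_zero] at h2
      exact h2
    rw [hs, psi_zero]
    rcases hp1 with rfl | rfl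
    · rw [f1neg1 f h16 h17 h18, mul_one]
    · simp only [neg_neg]
      rw [fm11 f h16 h17 h18, mul_one]
  · have hgqp : Int.gcd p (q + p) = 1 := by
      have h2 := (copC hg).add_mul_right_right 1
      rw [one_mul] at h2; exact copG h2
    rw [Dsym_red f h16 h17 h18 hp hq hg, Dsym_red f h16 h17 h18 hp hqp hgqp]
    have e1 : sres p (q + p) = sres p q := by
      have h2 := sres_add_mul p q 1
      rw [show q + 1 * p = q + p by ring] at h2; exact h2
    rw [e1]

lemma DsymP2 {p q : ℤ} (hg : Int.gcd p q = 1) : Dsym f p (-q) = Dsym f (-p) q := by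
  rcases eq_or_ne q 0 with rfl | hq
  · rw [neg_zero, Dsym_zero, Dsym_zero]
  · rw [Dsym_ne f (neg_ne_zero.2 hq), Dsym_ne f hq, abs_neg, sres_neg_neg q p,
      neg_neg, h16 p q hg]

lemma DsymP3 {p q : ℤ} (hg : Int.gcd p q = 1) :
    Dsym f p q * (Dsym f q (-p))⁻¹ = f p q := by
  rcases eq_or_ne p 0 with rfl | hp
  · have hq : q ≠ 0 := by
      intro h; subst h; simp [Int.gcd] at hg
    rw [neg_zero, Dsym_zero, inv_one, mul_one, Dsym_ne f hq, neg_zero, sres_zero,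
      psi_zero, mul_one]
  rcases eq_or_ne q 0 with rfl | hq
  · -- p = ±1
    have hp1 : p = 1 ∨ p = -1 := by
      have h0 : Int.gcd p 0 = 1 := hg
      rw [Int.gcd_zero_right] at h0
      omega
    have hgp : Int.gcd 0 p = 1 := by
      rw [Int.gcd_zero_left]
      rcases hp1 with rfl | rfl <;> decide
    rw [Dsym_zero, Dsym_ne f (neg_ne_zero.2 hp), neg_zero, sres_zero, psi_zero, mul_one, one_mul]
    have hf1 : f 0 (-p) = f 0 p := by
      have h2 := h16 0 p hgp
      rwa [neg_zero] at h2
    have hf2 : f p 0 * f 0 p = 1 := by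
      have h2 := h17 p 0 hg
      rwa [neg_zero] at h2
    rw [hf1, ← eq_inv_of_mul_eq_one_left hf2]
  · -- both nonzero
    have hgq : Int.gcd q (-p) = 1 := copG ((copC hg).symm.neg_right)
    have hDq : Dsym f q (-p) = psi f |q| (sres q (-p)) := by
      rw [Dsym_ne f (neg_ne_zero.2 hp), abs_neg, sres_neg_neg p q,
        master' f h16 h17 h18 hp hq hg, ← mul_assoc]
      have hone : f q (-p) * f p q = 1 := by
        have h2 := h17 q (-p) hgq
        rwa [neg_neg] at h2
      rw [hone, one_mul]
    rw [Dsym_ne f hq, hDq, mul_inv_cancel_right]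

end Props


lemma emod_natAbs_lt {q : ℤ} (hq : q ≠ 0) (a : ℤ) : (a % q).natAbs < q.natAbs := by
  have h1 : 0 ≤ a % q := Int.emod_nonneg _ hq
  have h2 : a % q < |q| := by
    rcases lt_or_gt_of_ne hq with h | h
    · have e : a % q = a % (-q) := by rw [Int.emod_neg]
      rw [e, abs_of_neg h]
      exact Int.emod_lt_of_pos _ (by omega)
    · rw [abs_of_pos h]
      exact Int.emod_lt_of_pos _ h
  rw [Int.abs_eq_natAbs] at h2
  omega

lemma per {D : ℤ → ℤ → G} (hP1 : ∀ p q : ℤ, Int.gcd p q = 1 → D p q = D p (q + p)) :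
    ∀ (a b : ℤ), Int.gcd a b = 1 → ∀ k : ℤ, D a (b + k * a) = D a b := by
  intro a b hg k
  induction k using Int.induction_on with
  | zero => rw [zero_mul, add_zero]
  | succ k ihk =>
    have hgk : Int.gcd a (b + (k : ℤ) * a) = 1 := copG ((copC hg).add_mul_right_right _)
    have step := hP1 a (b + (k : ℤ) * a) hgk
    rw [show b + ((k : ℤ) + 1) * a = b + (k : ℤ) * a + a by ring, ← step]
    exact ihk
  | pred k ihk =>
    have hgk : Int.gcd a (b + (-(k : ℤ) - 1) * a) = 1 :=
      copG ((copC hg).add_mul_right_right _)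
    have step := hP1 a (b + (-(k : ℤ) - 1) * a) hgk
    have e : b + (-(k : ℤ) - 1) * a + a = b + -(k : ℤ) * a := by ring
    rw [e] at step
    rw [step]
    exact ihk

lemma Duniq (f : ℤ → ℤ → G) {D₁ D₂ : ℤ → ℤ → G}
    (h₁1 : ∀ p q : ℤ, Int.gcd p q = 1 → D₁ p q = D₁ p (q + p))
    (h₁2 : ∀ p q : ℤ, Int.gcd p q = 1 → D₁ p (-q) = D₁ (-p) q)
    (h₁3 : ∀ p q : ℤ, Int.gcd p q = 1 → D₁ p q * (D₁ q (-p))⁻¹ = f p q)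
    (h₁4 : D₁ 1 0 = 1)
    (h₂1 : ∀ p q : ℤ, Int.gcd p q = 1 → D₂ p q = D₂ p (q + p))
    (h₂2 : ∀ p q : ℤ, Int.gcd p q = 1 → D₂ p (-q) = D₂ (-p) q)
    (h₂3 : ∀ p q : ℤ, Int.gcd p q = 1 → D₂ p q * (D₂ q (-p))⁻¹ = f p q)
    (h₂4 : D₂ 1 0 = 1) :
    ∀ p q : ℤ, Int.gcd p q = 1 → D₁ p q = D₂ p q := by
  have base0 : ∀ p : ℤ, Int.gcd p 0 = 1 → D₁ p 0 = D₂ p 0 := by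
    intro p hg
    have hp1 : p = 1 ∨ p = -1 := by
      rw [Int.gcd_zero_right] at hg
      omega
    rcases hp1 with rfl | rfl
    · rw [h₁4, h₂4]
    · have e₁ := h₁2 1 0 (by decide)
      rw [neg_zero] at e₁
      have e₂ := h₂2 1 0 (by decide)
      rw [neg_zero] at e₂
      rw [← e₁, ← e₂, h₁4, h₂4]
  suffices H : ∀ n : ℕ, ∀ p q : ℤ, q.natAbs ≤ n → Int.gcd p q = 1 → D₁ p q = D₂ p q by
    intro p q hg
    exact H q.natAbs p q le_rfl hg
  intro n
  induction n with
  | zero =>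
    intro p q hqn hg
    have hq0 : q = 0 := by omega
    subst hq0
    exact base0 p hg
  | succ n ih =>
    intro p q hqn hg
    rcases eq_or_ne q 0 with rfl | hq
    · exact base0 p hg
    · have hg' : Int.gcd q (-p) = 1 := copG ((copC hg).symm.neg_right)
      have harg : (-p) % q + ((-p) / q) * q = -p := by
        rw [Int.emod_def]; ring
      have hrg : Int.gcd q ((-p) % q) = 1 := by
        have e : (-p) % q = -p + (-((-p) / q)) * q := by
          rw [Int.emod_def]; ring
        rw [e]
        exact copG ((copC hg').add_mul_right_right _)
      have hrn : ((-p) % q).natAbs ≤ n := by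
        have := emod_natAbs_lt hq (-p)
        omega
      have per₁ := per h₁1 q ((-p) % q) hrg ((-p) / q)
      rw [harg] at per₁
      have per₂ := per h₂1 q ((-p) % q) hrg ((-p) / q)
      rw [harg] at per₂
      have e₁ : D₁ p q = f p q * D₁ q (-p) := by
        rw [← h₁3 p q hg, inv_mul_cancel_right]
      have e₂ : D₂ p q = f p q * D₂ q (-p) := by
        rw [← h₂3 p q hg, inv_mul_cancel_right]
      rw [e₁, e₂, per₁, per₂, ih q ((-p) % q) hrn hrg]

end RecipDed

/-- A reciprocity function uniquely determines a (normalized)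
generalized Dedekind symbol with that reciprocity function. -/
theorem reciprocity_determines_dedekind_symbol {G : Type*} [Group G]
    (f : ℤ → ℤ → G)
    (h16 : ∀ p q : ℤ, Int.gcd p q = 1 → f p (-q) = f (-p) q)
    (h17 : ∀ p q : ℤ, Int.gcd p q = 1 → f p q * f (-q) p = 1)
    (h18 : ∀ p q : ℤ, Int.gcd p q = 1 → f p (p + q) * f (p + q) q = f p q) :
    (∃ D : ℤ → ℤ → G,
      (∀ p q : ℤ, Int.gcd p q = 1 → D p q = D p (q + p)) ∧
      (∀ p q : ℤ, Int.gcd p q = 1 → D p (-q) = D (-p) q) ∧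
      (∀ p q : ℤ, Int.gcd p q = 1 → D p q * (D q (-p))⁻¹ = f p q) ∧
      D 1 0 = 1) ∧
    (∀ D₁ D₂ : ℤ → ℤ → G,
      ((∀ p q : ℤ, Int.gcd p q = 1 → D₁ p q = D₁ p (q + p)) ∧
       (∀ p q : ℤ, Int.gcd p q = 1 → D₁ p (-q) = D₁ (-p) q) ∧
       (∀ p q : ℤ, Int.gcd p q = 1 → D₁ p q * (D₁ q (-p))⁻¹ = f p q) ∧
       D₁ 1 0 = 1) →
      ((∀ p q : ℤ, Int.gcd p q = 1 → D₂ p q = D₂ p (q + p)) ∧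
       (∀ p q : ℤ, Int.gcd p q = 1 → D₂ p (-q) = D₂ (-p) q) ∧
       (∀ p q : ℤ, Int.gcd p q = 1 → D₂ p q * (D₂ q (-p))⁻¹ = f p q) ∧
       D₂ 1 0 = 1) →
      ∀ p q : ℤ, Int.gcd p q = 1 → D₁ p q = D₂ p q) := by
  constructor
  · exact ⟨RecipDed.Dsym f,
      fun p q hg => RecipDed.DsymP1 f h16 h17 h18 hg,
      fun p q hg => RecipDed.DsymP2 f h16 h17 h18 hg,
      fun p q hg => RecipDed.DsymP3 f h16 h17 h18 hg,
      RecipDed.Dsym_zero f 1⟩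
  · rintro D₁ D₂ ⟨a1, a2, a3, a4⟩ ⟨b1, b2, b3, b4⟩
    exact RecipDed.Duniq f a1 a2 a3 a4 b1 b2 b3 b4
end
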